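/- If the observability matrix O(T) = ∫₀ᵀ Φ(t)ᵀ Cᵀ C Φ(t) dt is nonsingular, then the final value E(T) of the Riccati solution is a nonsingular matrix. -/

import Mathlib

open Matrix Set intervalIntegral
open scoped Matrix

noncomputable section

section RiccatiAux

variable {B : Type*} [NormedAddCommGroup B] [NormedSpace ℝ B] [CompleteSpace B]


/-- Glue two solutions of an ODE on adjacent intervals. -/
lemma glue_ode (v : ℝ → B → B) {a c b : ℝ} (hac : a ≤ c) (hcb : c ≤ b) {f₁ f₂ : ℝ → B}
    (h₁ : ∀ t ∈ Icc a c, HasDerivWithinAt f₁ (v t (f₁ t)) (Icc a c) t)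
    (h₂ : ∀ t ∈ Icc c b, HasDerivWithinAt f₂ (v t (f₂ t)) (Icc c b) t)
    (hm : f₁ c = f₂ c) :
    ∃ f : ℝ → B, (∀ t ∈ Icc a c, f t = f₁ t) ∧ (∀ t ∈ Icc c b, f t = f₂ t) ∧
      ∀ t ∈ Icc a b, HasDerivWithinAt f (v t (f t)) (Icc a b) t := by
  classical
  set f : ℝ → B := fun t => if t ≤ c then f₁ t else f₂ t with hf
  have hfeq1 : ∀ s : ℝ, s ≤ c → f s = f₁ s := fun s hs => if_pos hs
  have hfeq2 : ∀ s ∈ Icc c b, f s = f₂ s := by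
    intro s hs
    rcases eq_or_lt_of_le hs.1 with h | h
    · simp only [f, ← h, if_pos le_rfl, hm]
    · simp only [f, if_neg (not_le.mpr h)]
  refine ⟨f, fun t ht => hfeq1 t ht.2, hfeq2, ?_⟩
  intro t ht
  rcases lt_trichotomy t c with h | h | h
  · -- t < c
    have ht' : t ∈ Icc a c := ⟨ht.1, h.le⟩
    have H : HasDerivWithinAt f₁ (v t (f₁ t)) (Icc a b) t := by
      refine (h₁ t ht').mono_of_mem_nhdsWithin ?_
      rw [mem_nhdsWithin]
      exact ⟨Iio c, isOpen_Iio, h, fun y hy => ⟨hy.2.1, hy.1.le⟩⟩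
    have heq : f =ᶠ[nhdsWithin t (Icc a b)] f₁ := by
      filter_upwards [nhdsWithin_le_nhds (Iio_mem_nhds h)] with y hy
      exact hfeq1 y (le_of_lt hy)
    have hft : f t = f₁ t := hfeq1 t h.le
    rw [hft]
    exact H.congr_of_eventuallyEq heq hft
  · -- t = c
    subst h
    have hmem : t ∈ Icc t b := ⟨le_rfl, ht.2⟩
    have H1 : HasDerivWithinAt f (v t (f t)) (Icc a t) t := by
      have := (h₁ t ⟨ht.1, le_rfl⟩).congr (fun s hs => hfeq1 s hs.2) (hfeq1 t le_rfl)
      rwa [hfeq1 t le_rfl]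
    have H2 : HasDerivWithinAt f (v t (f t)) (Icc t b) t := by
      have := (h₂ t hmem).congr (fun s hs => hfeq2 s hs) (hfeq2 t hmem)
      rwa [hfeq2 t hmem]
    have := H1.union H2
    rwa [Icc_union_Icc_eq_Icc ht.1 ht.2] at this
  · -- c < t
    have ht' : t ∈ Icc c b := ⟨h.le, ht.2⟩
    have H : HasDerivWithinAt f₂ (v t (f₂ t)) (Icc a b) t := by
      refine (h₂ t ht').mono_of_mem_nhdsWithin ?_
      rw [mem_nhdsWithin]
      exact ⟨Ioi c, isOpen_Ioi, h, fun y hy => ⟨hy.1.le, hy.2.2⟩⟩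
    have heq : f =ᶠ[nhdsWithin t (Icc a b)] f₂ := by
      filter_upwards [inter_mem_nhdsWithin (Icc a b) (Ioi_mem_nhds h)] with y hy
      exact hfeq2 y ⟨hy.2.le, hy.1.2⟩
    have hft : f t = f₂ t := hfeq2 t ht'
    rw [hft]
    exact H.congr_of_eventuallyEq heq hft
lemma exists_ode_sol_aux (v : ℝ → B → B) (K : NNReal)
    (hlip : ∀ t, LipschitzWith K (v t))
    (hzero : ∀ t, v t 0 = 0) :
    ∀ (n : ℕ) (a b t₀ : ℝ), t₀ ∈ Icc a b → b - a ≤ ((n : ℝ) + 1) * (2 * (K : ℝ) + 1)⁻¹ →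
      (∀ x, ContinuousOn (fun t => v t x) (Icc a b)) →
      ∀ x₀ : B, ∃ f : ℝ → B, f t₀ = x₀ ∧
        ∀ t ∈ Icc a b, HasDerivWithinAt f (v t (f t)) (Icc a b) t := by
  have hKpos : (0:ℝ) < 2 * (K : ℝ) + 1 := by positivity
  set δ : ℝ := (2 * (K : ℝ) + 1)⁻¹ with hδ
  have hδpos : 0 < δ := by positivity
  intro n
  induction n with
  | zero =>
    intro a b t₀ ht₀ hab hcont x₀
    norm_num at hab
    have hpl : IsPicardLindelof v (tmin := a) (tmax := b) ⟨t₀, ht₀⟩ x₀ ⟨‖x₀‖ + 1, by positivity⟩ 0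
        ⟨(K : ℝ) * (2 * ‖x₀‖ + 1), by positivity⟩ K := by
      constructor
      · exact fun t _ => (hlip t).lipschitzOnWith
      · exact fun x _ => hcont x
      · intro t _ x hx
        have h1 : ‖v t x‖ ≤ (K : ℝ) * ‖x‖ := by
          have := (hlip t).dist_le_mul x 0
          rwa [hzero t, dist_zero_right, dist_zero_right] at this
        have h2 : ‖x‖ ≤ 2 * ‖x₀‖ + 1 := by
          have hx' : ‖x - x₀‖ ≤ ‖x₀‖ + 1 := mem_closedBall_iff_norm.mp hx
          have := norm_sub_norm_le x x₀
          linarith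
        exact h1.trans (mul_le_mul_of_nonneg_left h2 K.coe_nonneg)
      · show (K : ℝ) * (2 * ‖x₀‖ + 1) * max (b - t₀) (t₀ - a) ≤ (‖x₀‖ + 1) - ((0 : NNReal) : ℝ)
        rw [NNReal.coe_zero, sub_zero]
        have hmax : max (b - t₀) (t₀ - a) ≤ δ := by
          rcases ht₀ with ⟨h1, h2⟩
          apply max_le <;> linarith
        have hC : (0:ℝ) ≤ (K : ℝ) * (2 * ‖x₀‖ + 1) := by positivity
        calc (K : ℝ) * (2 * ‖x₀‖ + 1) * max (b - t₀) (t₀ - a)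
            ≤ (K : ℝ) * (2 * ‖x₀‖ + 1) * δ := mul_le_mul_of_nonneg_left hmax hC
          _ ≤ (‖x₀‖ + 1) := by
              rw [hδ, mul_inv_le_iff₀ hKpos]
              nlinarith [norm_nonneg x₀, K.coe_nonneg]
    exact IsPicardLindelof.exists_eq_forall_mem_Icc_hasDerivWithinAt₀ hpl
  | succ n IH =>
    intro a b t₀ ht₀ hab hcont x₀
    have hn0 : (0:ℝ) ≤ (n:ℝ) := Nat.cast_nonneg n
    have hnδ0 : (0:ℝ) ≤ (n:ℝ) * δ := mul_nonneg hn0 hδpos.le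
    push_cast at hab
    by_cases hsmall : b - a ≤ ((n:ℝ) + 1) * δ
    · exact IH a b t₀ ht₀ hsmall hcont x₀
    push_neg at hsmall
    set c : ℝ := b - ((n:ℝ) + 1) * δ with hc
    have hac : a ≤ c := by simp only [hc]; nlinarith
    have hcb : c ≤ b := by simp only [hc]; nlinarith
    have hca : c - a ≤ ((n:ℝ) + 1) * δ := by simp only [hc]; nlinarith
    have hbc : b - c ≤ ((n:ℝ) + 1) * δ := by simp only [hc]; nlinarith
    have hcont1 : ∀ x, ContinuousOn (fun t => v t x) (Icc a c) :=
      fun x => (hcont x).mono (Icc_subset_Icc le_rfl hcb)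
    have hcont2 : ∀ x, ContinuousOn (fun t => v t x) (Icc c b) :=
      fun x => (hcont x).mono (Icc_subset_Icc hac le_rfl)
    by_cases htc : t₀ ≤ c
    · obtain ⟨f₁, hf₁0, hf₁⟩ := IH a c t₀ ⟨ht₀.1, htc⟩ hca hcont1 x₀
      obtain ⟨f₂, hf₂0, hf₂⟩ := IH c b c ⟨le_rfl, hcb⟩ hbc hcont2 (f₁ c)
      obtain ⟨f, hfl, hfr, hf⟩ := glue_ode v hac hcb hf₁ hf₂ (by rw [hf₂0])
      exact ⟨f, by rw [hfl t₀ ⟨ht₀.1, htc⟩, hf₁0], hf⟩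
    · push_neg at htc
      obtain ⟨f₂, hf₂0, hf₂⟩ := IH c b t₀ ⟨htc.le, ht₀.2⟩ hbc hcont2 x₀
      obtain ⟨f₁, hf₁0, hf₁⟩ := IH a c c ⟨hac, le_rfl⟩ hca hcont1 (f₂ c)
      obtain ⟨f, hfl, hfr, hf⟩ := glue_ode v hac hcb hf₁ hf₂ (by rw [hf₁0])
      exact ⟨f, by rw [hfr t₀ ⟨htc.le, ht₀.2⟩, hf₂0], hf⟩

/-- Global existence for globally-Lipschitz ODEs vanishing at 0. -/
lemma exists_ode_sol (v : ℝ → B → B) (K : NNReal)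
    (hlip : ∀ t, LipschitzWith K (v t))
    (hzero : ∀ t, v t 0 = 0) (a b t₀ : ℝ) (ht₀ : t₀ ∈ Icc a b)
    (hcont : ∀ x, ContinuousOn (fun t => v t x) (Icc a b)) (x₀ : B) :
    ∃ f : ℝ → B, f t₀ = x₀ ∧
      ∀ t ∈ Icc a b, HasDerivWithinAt f (v t (f t)) (Icc a b) t := by
  have hKpos : (0:ℝ) < 2 * (K : ℝ) + 1 := by positivity
  obtain ⟨n, hn⟩ := exists_nat_ge ((b - a) * (2 * (K : ℝ) + 1))
  refine exists_ode_sol_aux v K hlip hzero n a b t₀ ht₀ ?_ hcont x₀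
  have hinv : (0:ℝ) < (2 * (K : ℝ) + 1)⁻¹ := by positivity
  have h1 : (b - a) * (2 * (K : ℝ) + 1) * (2 * (K : ℝ) + 1)⁻¹ ≤ (n:ℝ) * (2 * (K : ℝ) + 1)⁻¹ :=
    mul_le_mul_of_nonneg_right hn hinv.le
  rw [mul_assoc, mul_inv_cancel₀ hKpos.ne', mul_one] at h1
  nlinarith [hinv.le]

open Matrix in
/-- Global existence for a linear ODE with coefficient matrix continuous on `Icc a b`. -/
lemma exists_linear_ode_sol {d : ℕ} (M : ℝ → Matrix (Fin d) (Fin d) ℝ) {a b : ℝ}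
    (hMc : ∀ i j, ContinuousOn (fun t => M t i j) (Icc a b))
    {t₀ : ℝ} (ht₀ : t₀ ∈ Icc a b) (x₀ : Fin d → ℝ) :
    ∃ x : ℝ → (Fin d → ℝ), x t₀ = x₀ ∧
      ∀ t ∈ Icc a b, HasDerivWithinAt x (M t *ᵥ x t) (Icc a b) t := by
  classical
  -- bound on the entries of M over Icc a b
  have hsumc : ContinuousOn (fun t => ∑ i, ∑ j, |M t i j|) (Icc a b) :=
    continuousOn_finset_sum _ fun i _ => continuousOn_finset_sum _ fun j _ => (hMc i j).abs
  obtain ⟨R, hR⟩ := isCompact_Icc.exists_bound_of_continuousOn hsumc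
  have hRent : ∀ t ∈ Icc a b, ∀ i j, |M t i j| ≤ max R 0 := by
    intro t ht i j
    have h1 : |M t i j| ≤ ∑ j, |M t i j| :=
      Finset.single_le_sum (fun j _ => abs_nonneg (M t i j)) (Finset.mem_univ j)
    have h2 : ∑ j, |M t i j| ≤ ∑ i, ∑ j, |M t i j| :=
      Finset.single_le_sum (f := fun i => ∑ j, |M t i j|)
        (fun i _ => Finset.sum_nonneg fun j _ => abs_nonneg _) (Finset.mem_univ i)
    have h3 := hR t ht
    rw [Real.norm_eq_abs] at h3
    have h4 : ∑ i, ∑ j, |M t i j| ≤ R := (le_abs_self _).trans h3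
    have := le_max_left R 0
    linarith
  set K₀ : ℝ := d * max R 0 with hK₀
  have hK₀0 : 0 ≤ K₀ := by positivity
  set v : ℝ → (Fin d → ℝ) → (Fin d → ℝ) := fun t y => if t ∈ Icc a b then M t *ᵥ y else 0 with hv
  have hlip : ∀ t, LipschitzWith K₀.toNNReal (v t) := by
    intro t
    apply LipschitzWith.of_dist_le_mul
    intro y z
    by_cases ht : t ∈ Icc a b
    · simp only [hv, if_pos ht]
      rw [dist_eq_norm, dist_eq_norm, ← Matrix.mulVec_sub]
      rw [Real.coe_toNNReal _ hK₀0]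
      apply pi_norm_le_iff_of_nonneg (by positivity) |>.2
      intro i
      calc ‖(M t *ᵥ (y - z)) i‖ = |∑ j, M t i j * (y - z) j| := rfl
        _ ≤ ∑ j, |M t i j * (y - z) j| := Finset.abs_sum_le_sum_abs _ _
        _ ≤ ∑ _j : Fin d, max R 0 * ‖y - z‖ := by
            apply Finset.sum_le_sum
            intro j _
            rw [abs_mul]
            have h1 := hRent t ht i j
            have h2 : |(y - z) j| ≤ ‖y - z‖ := norm_le_pi_norm (y - z) j
            nlinarith [abs_nonneg (M t i j), norm_nonneg (y - z), abs_nonneg ((y-z) j)]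
        _ = K₀ * ‖y - z‖ := by simp [hK₀]; ring
    · simp only [hv, if_neg ht]
      simp [dist_self]
      positivity
  have hzero : ∀ t, v t 0 = 0 := by
    intro t; by_cases ht : t ∈ Icc a b <;> simp [hv, ht]
  have hcont : ∀ y, ContinuousOn (fun t => v t y) (Icc a b) := by
    intro y
    apply ContinuousOn.congr (f := fun t => M t *ᵥ y)
    · apply continuousOn_pi.2
      intro i
      apply ContinuousOn.congr (f := fun t => ∑ j, M t i j * y j)
      · exact continuousOn_finset_sum _ fun j _ => (hMc i j).mul continuousOn_const
      · intro t _; rfl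
    · intro t ht; simp only [hv, ht, if_true]
  obtain ⟨x, hx0, hx⟩ := exists_ode_sol v K₀.toNNReal hlip hzero a b t₀ ht₀ hcont x₀
  refine ⟨x, hx0, fun t ht => ?_⟩
  have := hx t ht
  simpa only [hv, ht, if_true] using this

/-- entrywise bound from continuity on a compact interval -/
lemma exists_entry_bound {d e : ℕ} (M : ℝ → Matrix (Fin d) (Fin e) ℝ) {a b : ℝ}
    (hMc : ∀ i j, ContinuousOn (fun t => M t i j) (Icc a b)) :
    ∃ R : ℝ, 0 ≤ R ∧ ∀ t ∈ Icc a b, ∀ i j, |M t i j| ≤ R := by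
  have hsumc : ContinuousOn (fun t => ∑ i, ∑ j, |M t i j|) (Icc a b) :=
    continuousOn_finset_sum _ fun i _ => continuousOn_finset_sum _ fun j _ => (hMc i j).abs
  obtain ⟨R, hR⟩ := isCompact_Icc.exists_bound_of_continuousOn hsumc
  refine ⟨max R 0, le_max_right _ _, fun t ht i j => ?_⟩
  have h1 : |M t i j| ≤ ∑ j, |M t i j| :=
    Finset.single_le_sum (fun j _ => abs_nonneg (M t i j)) (Finset.mem_univ j)
  have h2 : ∑ j, |M t i j| ≤ ∑ i, ∑ j, |M t i j| :=
    Finset.single_le_sum (f := fun i => ∑ j, |M t i j|)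
      (fun i _ => Finset.sum_nonneg fun j _ => abs_nonneg _) (Finset.mem_univ i)
  have h3 := hR t ht
  rw [Real.norm_eq_abs] at h3
  have h4 : ∑ i, ∑ j, |M t i j| ≤ R := (le_abs_self _).trans h3
  have := le_max_left R 0
  linarith

lemma entry_abs_le_norm {d e : ℕ} (M : Fin d → Fin e → ℝ) (i : Fin d) (j : Fin e) :
    |M i j| ≤ ‖M‖ := by
  calc |M i j| = ‖M i j‖ := rfl
    _ ≤ ‖M i‖ := norm_le_pi_norm (M i) j
    _ ≤ ‖M‖ := norm_le_pi_norm M i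

lemma norm_le_of_entries {d e : ℕ} (M : Fin d → Fin e → ℝ) (r : ℝ) (hr : 0 ≤ r)
    (h : ∀ i j, |M i j| ≤ r) : ‖M‖ ≤ r := by
  apply pi_norm_le_iff_of_nonneg hr |>.2
  intro i
  apply pi_norm_le_iff_of_nonneg hr |>.2
  intro j
  exact h i j

open Matrix in
/-- The Riccati solution is symmetric on `[0, T]`. -/
lemma riccati_symm {d d' : ℕ} {T lam : ℝ} (hT : 0 < T)
    (C : Matrix (Fin d') (Fin d) ℝ)
    (A : ℝ → Matrix (Fin d) (Fin d) ℝ)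
    (hA : ∀ i j, ContinuousOn (fun t => A t i j) (Icc 0 T))
    (Q : Matrix (Fin d) (Fin d) ℝ) (hQ : Qᵀ = Q)
    (E : ℝ → Matrix (Fin d) (Fin d) ℝ) (hE0 : E 0 = Q)
    (hE : ∀ t ∈ Icc (0:ℝ) T, ∀ i j,
      HasDerivAt (fun s => E s i j)
        ((Cᵀ * C - (A t)ᵀ * E t - E t * A t - (1 / lam) • (E t * E t)) i j) t) :
    ∀ t ∈ Icc (0:ℝ) T, ∀ i j, E t i j = E t j i := by
  classical
  have hEc : ∀ i j, ContinuousOn (fun t => E t i j) (Icc 0 T) :=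
    fun i j t ht => ((hE t ht i j).continuousAt).continuousWithinAt
  obtain ⟨MA, hMA0, hMA⟩ := exists_entry_bound A hA
  obtain ⟨ME, hME0, hME⟩ := exists_entry_bound E hEc
  -- entry formula for the Riccati right-hand side
  have hentry : ∀ (t : ℝ) (M : Matrix (Fin d) (Fin d) ℝ) (i j : Fin d),
      (Cᵀ * C - (A t)ᵀ * M - M * A t - (1 / lam) • (M * M)) i j
        = (Cᵀ * C) i j - ∑ k, A t k i * M k j - ∑ k, M i k * A t k j
          - (1 / lam) * ∑ k, M i k * M k j := by
    intro t M i j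
    simp [Matrix.sub_apply, Matrix.mul_apply, Matrix.smul_apply, Matrix.transpose_apply,
      smul_eq_mul]
  set vf : ℝ → (Fin d → Fin d → ℝ) → (Fin d → Fin d → ℝ) := fun t M =>
    if t ∈ Icc (0:ℝ) T then
      (fun i j => (Cᵀ * C) i j - ∑ k, A t k i * M k j - ∑ k, M i k * A t k j
        - (1 / lam) * ∑ k, M i k * M k j)
    else 0 with hvf
  set K₀ : ℝ := 2 * d * MA + |1 / lam| * (2 * d * ME) with hK₀
  have hK₀0 : 0 ≤ K₀ := by positivity
  -- Lipschitz estimate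
  have hlip : ∀ t, LipschitzOnWith K₀.toNNReal (vf t)
      (Metric.closedBall (0 : Fin d → Fin d → ℝ) ME) := by
    intro t
    apply lipschitzOnWith_iff_dist_le_mul.2
    intro M hM N hN
    rw [mem_closedBall_zero_iff] at hM hN
    by_cases ht : t ∈ Icc (0:ℝ) T
    · rw [dist_eq_norm, dist_eq_norm, Real.coe_toNNReal _ hK₀0]
      apply norm_le_of_entries _ _ (mul_nonneg hK₀0 (norm_nonneg _))
      intro i j
      simp only [hvf, if_pos ht, Pi.sub_apply]
      have hsub : ∀ (a : Fin d) (b : Fin d), |M a b - N a b| ≤ ‖M - N‖ := fun a b => by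
        have := entry_abs_le_norm (M - N) a b
        simpa using this
      have h1 : |∑ k, A t k i * M k j - ∑ k, A t k i * N k j| ≤ d * (MA * ‖M - N‖) := by
        rw [← Finset.sum_sub_distrib]
        refine (Finset.abs_sum_le_sum_abs _ _).trans ?_
        have hterm : ∀ k ∈ Finset.univ, |A t k i * M k j - A t k i * N k j| ≤ MA * ‖M - N‖ := by
          intro k _
          rw [← mul_sub, abs_mul]
          exact mul_le_mul (hMA t ht k i) (hsub k j) (abs_nonneg _) hMA0
        calc ∑ k, |A t k i * M k j - A t k i * N k j| ≤ Finset.univ.card • (MA * ‖M - N‖) :=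
              Finset.sum_le_card_nsmul _ _ _ hterm
          _ = d * (MA * ‖M - N‖) := by
              simp [Finset.card_univ, nsmul_eq_mul]
      have h2 : |∑ k, M i k * A t k j - ∑ k, N i k * A t k j| ≤ d * (MA * ‖M - N‖) := by
        rw [← Finset.sum_sub_distrib]
        refine (Finset.abs_sum_le_sum_abs _ _).trans ?_
        have hterm : ∀ k ∈ Finset.univ, |M i k * A t k j - N i k * A t k j| ≤ MA * ‖M - N‖ := by
          intro k _
          rw [← sub_mul, abs_mul]
          calc |M i k - N i k| * |A t k j| ≤ ‖M - N‖ * MA :=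
                mul_le_mul (hsub i k) (hMA t ht k j) (abs_nonneg _) (norm_nonneg _)
            _ = MA * ‖M - N‖ := by ring
        calc ∑ k, |M i k * A t k j - N i k * A t k j| ≤ Finset.univ.card • (MA * ‖M - N‖) :=
              Finset.sum_le_card_nsmul _ _ _ hterm
          _ = d * (MA * ‖M - N‖) := by simp [Finset.card_univ, nsmul_eq_mul]
      have h3 : |∑ k, M i k * M k j - ∑ k, N i k * N k j| ≤ d * (2 * ME * ‖M - N‖) := by
        rw [← Finset.sum_sub_distrib]
        refine (Finset.abs_sum_le_sum_abs _ _).trans ?_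
        have hterm : ∀ k ∈ Finset.univ, |M i k * M k j - N i k * N k j| ≤ 2 * ME * ‖M - N‖ := by
          intro k _
          have hd : M i k * M k j - N i k * N k j
              = M i k * (M k j - N k j) + (M i k - N i k) * N k j := by ring
          rw [hd]
          refine (abs_add_le _ _).trans ?_
          rw [abs_mul, abs_mul]
          have e1 : |M i k| ≤ ME := (entry_abs_le_norm M i k).trans hM
          have e2 : |N k j| ≤ ME := (entry_abs_le_norm N k j).trans hN
          have e3 := hsub k j
          have e4 := hsub i k
          nlinarith [abs_nonneg (M i k), abs_nonneg (N k j), abs_nonneg (M k j - N k j),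
            abs_nonneg (M i k - N i k), norm_nonneg (M - N)]
        calc ∑ k, |M i k * M k j - N i k * N k j| ≤ Finset.univ.card • (2 * ME * ‖M - N‖) :=
              Finset.sum_le_card_nsmul _ _ _ hterm
          _ = d * (2 * ME * ‖M - N‖) := by simp [Finset.card_univ, nsmul_eq_mul]
      set S1 := ∑ k, A t k i * M k j
      set S1' := ∑ k, A t k i * N k j
      set S2 := ∑ k, M i k * A t k j
      set S2' := ∑ k, N i k * A t k j
      set S3 := ∑ k, M i k * M k j
      set S3' := ∑ k, N i k * N k j
      have hrw : (Cᵀ * C) i j - S1 - S2 - 1 / lam * S3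
          - ((Cᵀ * C) i j - S1' - S2' - 1 / lam * S3')
          = -(S1 - S1') - (S2 - S2') - (1/lam) * (S3 - S3') := by ring
      rw [hrw]
      have habs : |(-(S1 - S1') - (S2 - S2') - (1/lam) * (S3 - S3'))|
          ≤ |S1 - S1'| + |S2 - S2'| + |1/lam| * |S3 - S3'| := by
        calc |(-(S1 - S1') - (S2 - S2') - (1/lam) * (S3 - S3'))|
            ≤ |(-(S1 - S1') - (S2 - S2'))| + |(1/lam) * (S3 - S3')| := abs_sub _ _
          _ ≤ |S1 - S1'| + |S2 - S2'| + |1/lam| * |S3 - S3'| := by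
              rw [abs_mul]
              have := abs_sub (-(S1 - S1')) (S2 - S2')
              rw [abs_neg] at this
              linarith
      refine habs.trans ?_
      have := abs_nonneg (S3 - S3')
      have h5 : |1/lam| * |S3 - S3'| ≤ |1/lam| * (d * (2 * ME * ‖M - N‖)) :=
        mul_le_mul_of_nonneg_left h3 (abs_nonneg _)
      rw [hK₀]
      ring_nf
      ring_nf at h1 h2 h5
      linarith
    · simp only [hvf, if_neg ht]
      rw [dist_self]
      positivity
  -- the two solutions
  set F : ℝ → (Fin d → Fin d → ℝ) := fun t i j => E t i j with hF
  set G : ℝ → (Fin d → Fin d → ℝ) := fun t i j => E t j i with hG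
  have hFval : ∀ t ∈ Icc (0:ℝ) T, vf t (F t)
      = fun i j => (Cᵀ * C - (A t)ᵀ * E t - E t * A t - (1 / lam) • (E t * E t)) i j := by
    intro t ht
    funext i j
    simp only [hvf, if_pos ht, hF]
    rw [hentry t (E t) i j]
  have hCCsymm : ∀ i j, (Cᵀ * C) i j = (Cᵀ * C) j i := by
    intro i j
    simp [Matrix.mul_apply, Matrix.transpose_apply, mul_comm]
  have hGval : ∀ t ∈ Icc (0:ℝ) T, ∀ i j, vf t (G t) i j
      = (Cᵀ * C - (A t)ᵀ * E t - E t * A t - (1 / lam) • (E t * E t)) j i := by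
    intro t ht i j
    simp only [hvf, if_pos ht, hG]
    rw [hentry t (E t) j i]
    have e1 : ∑ k, A t k i * E t j k = ∑ k, E t j k * A t k i :=
      Finset.sum_congr rfl fun k _ => mul_comm _ _
    have e2 : ∑ k, E t k i * A t k j = ∑ k, A t k j * E t k i :=
      Finset.sum_congr rfl fun k _ => mul_comm _ _
    have e3 : ∑ k, E t k i * E t j k = ∑ k, E t j k * E t k i :=
      Finset.sum_congr rfl fun k _ => mul_comm _ _
    rw [hCCsymm i j, e1, e2, e3]
    ring
  have hFc : ContinuousOn F (Icc 0 T) :=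
    continuousOn_pi.2 fun i => continuousOn_pi.2 fun j => hEc i j
  have hGc : ContinuousOn G (Icc 0 T) :=
    continuousOn_pi.2 fun i => continuousOn_pi.2 fun j => hEc j i
  have hFd : ∀ t ∈ Ico (0:ℝ) T, HasDerivWithinAt F (vf t (F t)) (Ici t) t := by
    intro t ht
    rw [hFval t (Ico_subset_Icc_self ht)]
    exact hasDerivWithinAt_pi.2 fun i => hasDerivWithinAt_pi.2 fun j =>
      (hE t (Ico_subset_Icc_self ht) i j).hasDerivWithinAt
  have hGd : ∀ t ∈ Ico (0:ℝ) T, HasDerivWithinAt G (vf t (G t)) (Ici t) t := by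
    intro t ht
    have : vf t (G t) = fun i j =>
        (Cᵀ * C - (A t)ᵀ * E t - E t * A t - (1 / lam) • (E t * E t)) j i := by
      funext i j; exact hGval t (Ico_subset_Icc_self ht) i j
    rw [this]
    exact hasDerivWithinAt_pi.2 fun i => hasDerivWithinAt_pi.2 fun j =>
      (hE t (Ico_subset_Icc_self ht) j i).hasDerivWithinAt
  have hFs : ∀ t ∈ Ico (0:ℝ) T, F t ∈ Metric.closedBall (0 : Fin d → Fin d → ℝ) ME := by
    intro t ht
    rw [mem_closedBall_zero_iff]
    exact norm_le_of_entries _ _ hME0 fun i j => hME t (Ico_subset_Icc_self ht) i j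
  have hGs : ∀ t ∈ Ico (0:ℝ) T, G t ∈ Metric.closedBall (0 : Fin d → Fin d → ℝ) ME := by
    intro t ht
    rw [mem_closedBall_zero_iff]
    exact norm_le_of_entries _ _ hME0 fun i j => hME t (Ico_subset_Icc_self ht) j i
  have h00 : F 0 = G 0 := by
    funext i j
    simp only [hF, hG, hE0]
    conv_lhs => rw [← hQ]
    rfl
  have heq := ODE_solution_unique_of_mem_Icc_right (fun t _ => hlip t) hFc hFd hFs hGc hGd hGs h00
  intro t ht i j
  have := heq ht
  have h2 := congrFun (congrFun this i) j
  exact h2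

lemma dot_self_nonneg {d : ℕ} (v : Fin d → ℝ) : 0 ≤ dotProduct v v :=
  Finset.sum_nonneg fun i _ => mul_self_nonneg (v i)

open Matrix in
lemma quad_algebra {d d' : ℕ} (lam : ℝ) (hlam : lam ≠ 0)
    (Am Em : Matrix (Fin d) (Fin d) ℝ) (C : Matrix (Fin d') (Fin d) ℝ)
    (hs : Emᵀ = Em) (x : Fin d → ℝ) :
    ((Am + (1/(2*lam)) • Em) *ᵥ x) ⬝ᵥ (Em *ᵥ x)
      + x ⬝ᵥ ((Cᵀ * C - Amᵀ * Em - Em * Am - (1/lam) • (Em * Em)) *ᵥ x)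
      + x ⬝ᵥ (Em *ᵥ ((Am + (1/(2*lam)) • Em) *ᵥ x))
    = (C *ᵥ x) ⬝ᵥ (C *ᵥ x) := by
  set H : Matrix (Fin d) (Fin d) ℝ := Am + (1/(2*lam)) • Em with hH
  have h1 : (H *ᵥ x) ⬝ᵥ (Em *ᵥ x) = x ⬝ᵥ ((Hᵀ * Em) *ᵥ x) := by
    rw [← Matrix.mulVec_mulVec, Matrix.mulVec_transpose, dotProduct_comm,
      Matrix.dotProduct_mulVec]
    exact dotProduct_comm _ _
  have h2 : x ⬝ᵥ (Em *ᵥ (H *ᵥ x)) = x ⬝ᵥ ((Em * H) *ᵥ x) := by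
    rw [Matrix.mulVec_mulVec]
  rw [h1, h2, ← dotProduct_add, ← dotProduct_add, ← Matrix.add_mulVec,
    ← Matrix.add_mulVec]
  have hmat : Hᵀ * Em + (Cᵀ * C - Amᵀ * Em - Em * Am - (1/lam) • (Em * Em)) + Em * H
      = Cᵀ * C := by
    rw [hH, Matrix.transpose_add, Matrix.transpose_smul, hs, Matrix.add_mul, Matrix.mul_add,
      Matrix.smul_mul, Matrix.mul_smul]
    have hcoef : (1/(2*lam) : ℝ) + 1/(2*lam) = 1/lam := by
      rw [← add_div, div_eq_div_iff (by simpa using hlam) hlam]; ring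
    module
  rw [hmat]
  rw [← Matrix.mulVec_mulVec, Matrix.mulVec_transpose, dotProduct_comm,
    Matrix.dotProduct_mulVec]

open Matrix in
lemma quad_deriv {d : ℕ} (E : ℝ → Matrix (Fin d) (Fin d) ℝ)
    (E' : Matrix (Fin d) (Fin d) ℝ) (x : ℝ → Fin d → ℝ) (x' : Fin d → ℝ)
    {t : ℝ} {s : Set ℝ}
    (hEd : ∀ i j, HasDerivWithinAt (fun u => E u i j) (E' i j) s t)
    (hxd : HasDerivWithinAt x x' s t) :
    HasDerivWithinAt (fun u => x u ⬝ᵥ (E u *ᵥ x u))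
      (x' ⬝ᵥ (E t *ᵥ x t) + x t ⬝ᵥ (E' *ᵥ x t) + x t ⬝ᵥ (E t *ᵥ x')) s t := by
  have hxi : ∀ i, HasDerivWithinAt (fun u => x u i) (x' i) s t :=
    fun i => hasDerivWithinAt_pi.1 hxd i
  have hinner : ∀ i, HasDerivWithinAt (fun u => (E u *ᵥ x u) i)
      ((E' *ᵥ x t) i + (E t *ᵥ x') i) s t := by
    intro i
    have h : HasDerivWithinAt (fun u => ∑ j, E u i j * x u j)
        (∑ j, (E' i j * x t j + E t i j * x' j)) s t :=
      HasDerivWithinAt.fun_sum fun j _ => (hEd i j).mul (hxi j)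
    have heq : (∑ j, (E' i j * x t j + E t i j * x' j))
        = (E' *ᵥ x t) i + (E t *ᵥ x') i := by
      simp [Matrix.mulVec, dotProduct, Finset.sum_add_distrib]
    rw [heq] at h
    exact h
  have htot : HasDerivWithinAt (fun u => ∑ i, x u i * (E u *ᵥ x u) i)
      (∑ i, (x' i * (E t *ᵥ x t) i + x t i * ((E' *ᵥ x t) i + (E t *ᵥ x') i))) s t :=
    HasDerivWithinAt.fun_sum fun i _ => (hxi i).mul (hinner i)
  have heq2 : (∑ i, (x' i * (E t *ᵥ x t) i + x t i * ((E' *ᵥ x t) i + (E t *ᵥ x') i)))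
      = x' ⬝ᵥ (E t *ᵥ x t) + x t ⬝ᵥ (E' *ᵥ x t) + x t ⬝ᵥ (E t *ᵥ x') := by
    simp [dotProduct, Finset.sum_add_distrib, mul_add]
    ring_nf
  rw [heq2] at htot
  exact htot

lemma mono_of_deriv_nonneg' {a b : ℝ} (hab : a < b) (f g : ℝ → ℝ)
    (hd : ∀ t ∈ Icc a b, HasDerivWithinAt f (g t) (Icc a b) t)
    (hg : ∀ t ∈ Icc a b, 0 ≤ g t) : MonotoneOn f (Icc a b) := by
  apply monotoneOn_of_deriv_nonneg (convex_Icc a b)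
  · exact fun t ht => (hd t ht).continuousWithinAt
  · intro t ht
    rw [interior_Icc] at ht
    exact (((hd t (Ioo_subset_Icc_self ht)).hasDerivAt
      (Icc_mem_nhds ht.1 ht.2))).differentiableAt.differentiableWithinAt
  · intro t ht
    rw [interior_Icc] at ht
    rw [((hd t (Ioo_subset_Icc_self ht)).hasDerivAt (Icc_mem_nhds ht.1 ht.2)).deriv]
    exact hg t (Ioo_subset_Icc_self ht)

open Matrix in
lemma mulVec_lipschitzWith {d : ℕ} (M : Matrix (Fin d) (Fin d) ℝ) {R : ℝ} (hR0 : 0 ≤ R)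
    (hent : ∀ i j, |M i j| ≤ R) :
    LipschitzWith (d * R).toNNReal (fun y => M *ᵥ y) := by
  apply LipschitzWith.of_dist_le_mul
  intro y z
  rw [dist_eq_norm, dist_eq_norm, ← Matrix.mulVec_sub, Real.coe_toNNReal _ (by positivity)]
  apply pi_norm_le_iff_of_nonneg (by positivity) |>.2
  intro i
  calc ‖(M *ᵥ (y - z)) i‖ = |∑ j, M i j * (y - z) j| := rfl
    _ ≤ ∑ j, |M i j * (y - z) j| := Finset.abs_sum_le_sum_abs _ _
    _ ≤ ∑ _j : Fin d, R * ‖y - z‖ := by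
        apply Finset.sum_le_sum
        intro j _
        rw [abs_mul]
        have h2 : |(y - z) j| ≤ ‖y - z‖ := norm_le_pi_norm (y - z) j
        have := abs_nonneg (M i j)
        nlinarith [norm_nonneg (y - z), hent i j, abs_nonneg ((y - z) j)]
    _ = d * R * ‖y - z‖ := by simp [Finset.card_univ]; ring

open Matrix in
lemma linear_ode_unique {d : ℕ} {T : ℝ} (hT : 0 < T) (A : ℝ → Matrix (Fin d) (Fin d) ℝ)
    (hA : ∀ i j, ContinuousOn (fun t => A t i j) (Icc 0 T))
    (x y : ℝ → Fin d → ℝ)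
    (hxc : ContinuousOn x (Icc 0 T)) (hyc : ContinuousOn y (Icc 0 T))
    (hxd : ∀ t ∈ Icc (0:ℝ) T, HasDerivWithinAt x (A t *ᵥ x t) (Icc 0 T) t)
    (hyd : ∀ t ∈ Icc (0:ℝ) T, HasDerivWithinAt y (A t *ᵥ y t) (Icc 0 T) t)
    (h0 : x 0 = y 0) : Set.EqOn x y (Icc 0 T) := by
  classical
  obtain ⟨MA, hMA0, hMA⟩ := exists_entry_bound A hA
  set w : ℝ → (Fin d → ℝ) → (Fin d → ℝ) :=
    fun t z => if t ∈ Icc (0:ℝ) T then A t *ᵥ z else 0 with hw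
  have hlip : ∀ t, LipschitzOnWith (d * MA).toNNReal (w t) Set.univ := by
    intro t
    by_cases ht : t ∈ Icc (0:ℝ) T
    · have := mulVec_lipschitzWith (A t) hMA0 (fun i j => hMA t ht i j)
      simp only [hw, if_pos ht]
      exact this.lipschitzOnWith
    · simp only [hw, if_neg ht]
      exact (LipschitzWith.const' (0 : Fin d → ℝ)).lipschitzOnWith
  have hmem : ∀ t ∈ Ico (0:ℝ) T, Icc (0:ℝ) T ∈ nhdsWithin t (Ici t) := by
    intro t ht
    rw [mem_nhdsWithin]
    exact ⟨Iio T, isOpen_Iio, ht.2, fun s hs => ⟨ht.1.trans hs.2, hs.1.le⟩⟩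
  have hxd' : ∀ t ∈ Ico (0:ℝ) T, HasDerivWithinAt x (w t (x t)) (Ici t) t := by
    intro t ht
    have := (hxd t (Ico_subset_Icc_self ht)).mono_of_mem_nhdsWithin (hmem t ht)
    simpa only [hw, if_pos (Ico_subset_Icc_self ht)] using this
  have hyd' : ∀ t ∈ Ico (0:ℝ) T, HasDerivWithinAt y (w t (y t)) (Ici t) t := by
    intro t ht
    have := (hyd t (Ico_subset_Icc_self ht)).mono_of_mem_nhdsWithin (hmem t ht)
    simpa only [hw, if_pos (Ico_subset_Icc_self ht)] using this
  exact ODE_solution_unique_of_mem_Icc_right (s := fun _ => Set.univ) (fun t _ => hlip t)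
    hxc hxd' (fun t _ => Set.mem_univ _) hyc hyd' (fun t _ => Set.mem_univ _) h0

lemma entry_mul_continuousOn {p q r : ℕ} {s : Set ℝ}
    (M : ℝ → Matrix (Fin p) (Fin q) ℝ) (N : ℝ → Matrix (Fin q) (Fin r) ℝ)
    (hM : ∀ i j, ContinuousOn (fun t => M t i j) s)
    (hN : ∀ i j, ContinuousOn (fun t => N t i j) s) :
    ∀ i j, ContinuousOn (fun t => (M t * N t) i j) s := by
  intro i j
  have h : (fun t => (M t * N t) i j) = fun t => ∑ k, M t i k * N t k j := by
    funext t; rw [Matrix.mul_apply]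
  rw [h]
  exact continuousOn_finset_sum _ fun k _ => (hM i k).mul (hN k j)

end RiccatiAux

/-- if the observability matrix `O(T)` is nonsingular, then the final
value `E(T)` of the Riccati solution is nonsingular. -/
theorem statement1
    (d d' : ℕ) (hd : 1 ≤ d) (hd' : 1 ≤ d') (T : ℝ) (hT : 0 < T) (lam : ℝ) (hlam : 0 < lam)
    (C : Matrix (Fin d') (Fin d) ℝ)
    (A : ℝ → Matrix (Fin d) (Fin d) ℝ)
    (hA : ∀ i j, ContinuousOn (fun t => A t i j) (Icc 0 T))
    (Q : Matrix (Fin d) (Fin d) ℝ) (hQ : Q.PosSemidef)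
    (E : ℝ → Matrix (Fin d) (Fin d) ℝ)
    (hE0 : E 0 = Q)
    (hE : ∀ t ∈ Icc (0:ℝ) T, ∀ i j,
      HasDerivAt (fun s => E s i j)
        ((Cᵀ * C - (A t)ᵀ * E t - E t * A t - (1 / lam) • (E t * E t)) i j) t)
    (Φ : ℝ → Matrix (Fin d) (Fin d) ℝ)
    (hΦ0 : Φ 0 = 1)
    (hΦ : ∀ t ∈ Icc (0:ℝ) T, ∀ i j,
      HasDerivAt (fun s => Φ s i j) ((A t * Φ t) i j) t)
    (hO : (Matrix.of fun i j => ∫ t in (0:ℝ)..T, ((Φ t)ᵀ * Cᵀ * C * Φ t) i j :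
        Matrix (Fin d) (Fin d) ℝ).det ≠ 0) :
    (E T).det ≠ 0 := by
  classical
  intro hdet
  obtain ⟨v, hv0, hvE⟩ := Matrix.exists_mulVec_eq_zero_iff.mpr hdet
  have h0T : (0:ℝ) ∈ Icc (0:ℝ) T := ⟨le_rfl, hT.le⟩
  have hTmem : T ∈ Icc (0:ℝ) T := ⟨hT.le, le_rfl⟩
  -- continuity of entries
  have hEc : ∀ i j, ContinuousOn (fun t => E t i j) (Icc 0 T) :=
    fun i j t ht => ((hE t ht i j).continuousAt).continuousWithinAt
  have hΦc : ∀ i j, ContinuousOn (fun t => Φ t i j) (Icc 0 T) :=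
    fun i j t ht => ((hΦ t ht i j).continuousAt).continuousWithinAt
  -- Q is symmetric
  have hQt : Qᵀ = Q := by
    ext i j
    have h1 := congrFun (congrFun hQ.1 i) j
    simpa [Matrix.conjTranspose_apply] using h1
  -- E is symmetric on [0,T]
  have hsymm := riccati_symm hT C A hA Q hQt E hE0 hE
  have hsymmM : ∀ t ∈ Icc (0:ℝ) T, (E t)ᵀ = E t := by
    intro t ht
    ext i j
    rw [Matrix.transpose_apply]
    exact hsymm t ht j i
  -- closed-loop matrix
  set Bm : ℝ → Matrix (Fin d) (Fin d) ℝ := fun t => A t + (1/(2*lam)) • E t with hBm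
  have hBc : ∀ i j, ContinuousOn (fun t => Bm t i j) (Icc 0 T) := by
    intro i j
    have h : (fun t => Bm t i j) = fun t => A t i j + (1/(2*lam)) * E t i j := by
      funext t
      simp [hBm, Matrix.add_apply, Matrix.smul_apply, smul_eq_mul]
    rw [h]
    exact (hA i j).add (continuousOn_const.mul (hEc i j))
  -- derivative of the quadratic form along closed-loop trajectories
  have hquad : ∀ (y : ℝ → Fin d → ℝ),
      (∀ t ∈ Icc (0:ℝ) T, HasDerivWithinAt y (Bm t *ᵥ y t) (Icc 0 T) t) →
      ∀ t ∈ Icc (0:ℝ) T, HasDerivWithinAt (fun s => y s ⬝ᵥ (E s *ᵥ y s))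
        ((C *ᵥ y t) ⬝ᵥ (C *ᵥ y t)) (Icc 0 T) t := by
    intro y hyd t ht
    have h := quad_deriv E _ y (Bm t *ᵥ y t)
      (fun i j => (hE t ht i j).hasDerivWithinAt) (hyd t ht)
    have halg := quad_algebra lam hlam.ne' (A t) (E t) C (hsymmM t ht) (y t)
    rw [hBm] at h
    rw [← halg]
    exact h
  -- E t is positive semidefinite on [0,T]
  have hPSD : ∀ t₁ ∈ Icc (0:ℝ) T, ∀ w : Fin d → ℝ, 0 ≤ w ⬝ᵥ (E t₁ *ᵥ w) := by
    intro t₁ ht₁ w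
    obtain ⟨y, hy0, hyd⟩ := exists_linear_ode_sol Bm hBc ht₁ w
    have hmono := mono_of_deriv_nonneg' hT _ _ (hquad y hyd)
      (fun t _ => dot_self_nonneg _)
    have hg0 : 0 ≤ y 0 ⬝ᵥ (E 0 *ᵥ y 0) := by
      rw [hE0]
      simpa using hQ.dotProduct_mulVec_nonneg (y 0)
    have h2 : 0 ≤ y t₁ ⬝ᵥ (E t₁ *ᵥ y t₁) := hg0.trans (hmono h0T ht₁ ht₁.1)
    rwa [hy0] at h2
  have hpsdM : ∀ t ∈ Icc (0:ℝ) T, (E t).PosSemidef := by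
    intro t ht
    refine Matrix.PosSemidef.of_dotProduct_mulVec_nonneg ?_ ?_
    · rw [Matrix.IsHermitian]
      ext i j
      rw [Matrix.conjTranspose_apply, star_trivial]
      exact hsymm t ht j i
    · intro z
      simpa using hPSD t ht z
  -- closed-loop trajectory ending at v
  obtain ⟨x, hxT, hxd⟩ := exists_linear_ode_sol Bm hBc hTmem v
  have hxc : ContinuousOn x (Icc 0 T) :=
    fun t ht => (hxd t ht).continuousWithinAt
  set f : ℝ → ℝ := fun s => x s ⬝ᵥ (E s *ᵥ x s) with hf
  have hfd := hquad x hxd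
  have hfmono := mono_of_deriv_nonneg' hT _ _ hfd (fun t _ => dot_self_nonneg _)
  have hfT : f T = 0 := by
    simp [hf, hxT, hvE, dotProduct_zero]
  have hf0 : 0 ≤ f 0 := by
    rw [hf]
    simp only [hE0]
    simpa using hQ.dotProduct_mulVec_nonneg (x 0)
  have hfzero : ∀ t ∈ Icc (0:ℝ) T, f t = 0 := by
    intro t ht
    have h1 : f t ≤ 0 := (hfmono ht hTmem ht.2).trans_eq hfT
    have h2 : 0 ≤ f t := hf0.trans (hfmono h0T ht ht.1)
    linarith
  -- C x(t) = 0 on [0,T]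
  have hCx : ∀ t ∈ Icc (0:ℝ) T, C *ᵥ x t = 0 := by
    intro t ht
    have hu := (uniqueDiffOn_Icc hT) t ht
    have hconst : HasDerivWithinAt f 0 (Icc 0 T) t :=
      (hasDerivWithinAt_const t (Icc (0:ℝ) T) (0:ℝ)).congr
        (fun s hs => hfzero s hs) (hfzero t ht)
    have e1 := (hfd t ht).derivWithin hu
    have e2 := hconst.derivWithin hu
    have : (C *ᵥ x t) ⬝ᵥ (C *ᵥ x t) = 0 := by rw [← e1, e2]
    exact dotProduct_self_eq_zero.mp this
  -- E(t) x(t) = 0 on [0,T]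
  have hEx : ∀ t ∈ Icc (0:ℝ) T, E t *ᵥ x t = 0 := by
    intro t ht
    apply ((hpsdM t ht).dotProduct_mulVec_zero_iff (x t)).mp
    simpa using hfzero t ht
  -- x solves the open-loop linear equation
  have hxlin : ∀ t ∈ Icc (0:ℝ) T, HasDerivWithinAt x (A t *ᵥ x t) (Icc 0 T) t := by
    intro t ht
    have h := hxd t ht
    rw [hBm] at h
    rwa [Matrix.add_mulVec, Matrix.smul_mulVec, hEx t ht, smul_zero, add_zero] at h
  -- x agrees with Φ · x 0
  set g : ℝ → Fin d → ℝ := fun t => Φ t *ᵥ x 0 with hg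
  have hgc : ContinuousOn g (Icc 0 T) := by
    apply continuousOn_pi.2
    intro i
    have h : (fun t => g t i) = fun t => ∑ j, Φ t i j * x 0 j := by
      funext t; rfl
    rw [h]
    exact continuousOn_finset_sum _ fun j _ => (hΦc i j).mul continuousOn_const
  have hgd : ∀ t ∈ Icc (0:ℝ) T, HasDerivWithinAt g (A t *ᵥ g t) (Icc 0 T) t := by
    intro t ht
    apply HasDerivAt.hasDerivWithinAt
    apply hasDerivAt_pi.2
    intro i
    have h : HasDerivAt (fun s => ∑ j, Φ s i j * x 0 j) (∑ j, (A t * Φ t) i j * x 0 j) t :=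
      HasDerivAt.fun_sum fun j _ => (hΦ t ht i j).mul_const _
    have hval : (A t *ᵥ g t) i = ∑ j, (A t * Φ t) i j * x 0 j := by
      rw [hg]
      show (A t *ᵥ (Φ t *ᵥ x 0)) i = _
      rw [Matrix.mulVec_mulVec]
      rfl
    rw [hval]
    exact h
  have hxeq : Set.EqOn x g (Icc 0 T) := by
    apply linear_ode_unique hT A hA x g hxc hgc hxlin hgd
    rw [hg]
    show x 0 = Φ 0 *ᵥ x 0
    rw [hΦ0, Matrix.one_mulVec]
  -- x 0 ≠ 0
  have hx0ne : x 0 ≠ 0 := by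
    intro h0
    have hxTeq : x T = 0 := by
      rw [hxeq hTmem, hg]
      show Φ T *ᵥ x 0 = 0
      rw [h0, Matrix.mulVec_zero]
    rw [hxT] at hxTeq
    exact hv0 hxTeq
  -- C Φ(t) x 0 = 0
  have hΦx : ∀ t ∈ Icc (0:ℝ) T, C *ᵥ (Φ t *ᵥ x 0) = 0 := by
    intro t ht
    have := hCx t ht
    rwa [hxeq ht] at this
  -- entries of the observability integrand are continuous
  have hGc : ∀ i j, ContinuousOn (fun t => ((Φ t)ᵀ * Cᵀ * C * Φ t) i j) (Icc 0 T) := by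
    have h1 : ∀ i j, ContinuousOn (fun t => ((Φ t)ᵀ : Matrix (Fin d) (Fin d) ℝ) i j) (Icc 0 T) :=
      fun i j => hΦc j i
    have h2 := entry_mul_continuousOn (fun t => (Φ t)ᵀ) (fun _ => Cᵀ) h1
      (fun i j => continuousOn_const)
    have h3 := entry_mul_continuousOn (fun t => (Φ t)ᵀ * Cᵀ) (fun _ => C) h2
      (fun i j => continuousOn_const)
    exact entry_mul_continuousOn (fun t => (Φ t)ᵀ * Cᵀ * C) Φ h3 hΦc
  -- the observability matrix kills x 0
  have hOx : (Matrix.of fun i j => ∫ t in (0:ℝ)..T, ((Φ t)ᵀ * Cᵀ * C * Φ t) i j :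
      Matrix (Fin d) (Fin d) ℝ) *ᵥ x 0 = 0 := by
    funext i
    show ∑ j, (∫ t in (0:ℝ)..T, ((Φ t)ᵀ * Cᵀ * C * Φ t) i j) * x 0 j = 0
    have hint : ∀ j, IntervalIntegrable (fun t => ((Φ t)ᵀ * Cᵀ * C * Φ t) i j)
        MeasureTheory.volume 0 T := by
      intro j
      apply ContinuousOn.intervalIntegrable
      rw [Set.uIcc_of_le hT.le]
      exact hGc i j
    have step1 : ∀ j, (∫ t in (0:ℝ)..T, ((Φ t)ᵀ * Cᵀ * C * Φ t) i j) * x 0 j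
        = ∫ t in (0:ℝ)..T, ((Φ t)ᵀ * Cᵀ * C * Φ t) i j * x 0 j := by
      intro j
      exact (intervalIntegral.integral_mul_const (x 0 j) _).symm
    rw [Finset.sum_congr rfl fun j _ => step1 j]
    rw [← intervalIntegral.integral_finset_sum (fun j _ => (hint j).mul_const (x 0 j))]
    have hzero : Set.EqOn (fun t => ∑ j, ((Φ t)ᵀ * Cᵀ * C * Φ t) i j * x 0 j)
        (fun _ => (0:ℝ)) (Set.uIcc 0 T) := by
      intro t ht
      rw [Set.uIcc_of_le hT.le] at ht
      have hGx : ((Φ t)ᵀ * Cᵀ * C * Φ t) *ᵥ x 0 = 0 := by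
        rw [← Matrix.mulVec_mulVec, ← Matrix.mulVec_mulVec, ← Matrix.mulVec_mulVec,
          hΦx t ht, Matrix.mulVec_zero, Matrix.mulVec_zero]
      have := congrFun hGx i
      simpa [Matrix.mulVec, dotProduct] using this
    rw [intervalIntegral.integral_congr hzero]
    simp
  exact hO (Matrix.exists_mulVec_eq_zero_iff.mp ⟨x 0, hx0ne, hOx⟩)
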